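/- Let Z be a Galton-Watson process with offspring distribution p = (p_k)_{k≥0}, started at 1, and let Θ be the associated Galton-Watson tree. Then Θ is finite almost surely if and only if p is (sub)critical, i.e. Σ_k k p_k ≤ 1 (excluding the degenerate case p₁ = 1). -/

import Mathlib

open MeasureTheory ProbabilityTheory
open scoped ENNReal NNReal

/-- The Galton–Watson tree built from the iid offspring counts `(χ_u)`:
`u ∈ Θ(ω)` iff for every `i < |u|`, the letter `u_i` satisfies `1 ≤ u_i ≤ χ_{u_1⋯u_{i-1}}(ω)`. -/
def gwTree {Ω : Type*} (χ : List ℕ → Ω → ℕ) (ω : Ω) : Set (List ℕ) :=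
  {u | ∀ i < u.length, 1 ≤ u.getD i 0 ∧ u.getD i 0 ≤ χ (u.take i) ω}

namespace GWaux


variable {Ω : Type*} {χ : List ℕ → Ω → ℕ} {ω : Ω}

lemma nil_mem : [] ∈ gwTree χ ω := fun i hi => absurd hi (by simp)

lemma take_mem (hu : u ∈ gwTree χ ω) (m : ℕ) : u.take m ∈ gwTree χ ω := by
  intro i hi
  simp only [List.length_take, lt_min_iff] at hi
  obtain ⟨him, hil⟩ := hi
  have h1 : (u.take m).getD i 0 = u.getD i 0 := by
    rw [List.getD_eq_getElem _ _ (by simp [hil, him]), List.getD_eq_getElem _ _ hil]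
    exact List.getElem_take
  have h2 : (u.take m).take i = u.take i := by
    rw [List.take_take, min_eq_left him.le]
  rw [h1, h2]; exact hu i hil

lemma cons_mem {a : ℕ} {v : List ℕ} :
    (a :: v) ∈ gwTree χ ω ↔ (1 ≤ a ∧ a ≤ χ [] ω) ∧ v ∈ gwTree (fun w => χ (a :: w)) ω := by
  constructor
  · intro h
    refine ⟨by simpa using h 0 (by simp), fun i hi => ?_⟩
    have := h (i + 1) (by simp; omega)
    simpa using this
  · rintro ⟨⟨h1, h2⟩, hv⟩ i hi
    match i with
    | 0 => simpa using ⟨h1, h2⟩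
    | (i + 1) =>
      have := hv i (by simp at hi; omega)
      simpa using this

/-- Extinction event: generation `n` is empty. -/
def extEvent (χ : List ℕ → Ω → ℕ) (n : ℕ) : Set Ω :=
  {ω | ∀ u : List ℕ, u.length = n → u ∉ gwTree χ ω}

lemma extEvent_zero : extEvent χ 0 = ∅ := by
  ext ω; simp only [extEvent, Set.mem_setOf_eq, Set.mem_empty_iff_false, iff_false, not_forall]
  exact ⟨[], rfl, by simpa using (nil_mem : [] ∈ gwTree χ ω)⟩

lemma extEvent_mono {n m : ℕ} (h : n ≤ m) : extEvent χ n ⊆ extEvent χ m := by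
  intro ω hω u hu hmem
  exact hω (u.take n) (by simp [hu, h]) (take_mem hmem n)

lemma gen_finite (χ : List ℕ → Ω → ℕ) (ω : Ω) :
    ∀ n, {u | u ∈ gwTree χ ω ∧ u.length = n}.Finite
  | 0 => (Set.finite_singleton []).subset (by
      rintro u ⟨_, h⟩
      simp [List.length_eq_zero_iff.mp h])
  | (n + 1) => by
      have IH := gen_finite χ ω n
      apply Set.Finite.subset
        (IH.biUnion (fun v _ => (Set.finite_Iic (χ v ω)).image (fun a => v ++ [a])))
      rintro u ⟨hu, hlen⟩
      have hn : n < u.length := by omega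
      refine Set.mem_biUnion (⟨take_mem hu n, by simp [hlen]⟩ :
        u.take n ∈ {u | u ∈ gwTree χ ω ∧ u.length = n}) ?_
      refine ⟨u.getD n 0, ?_, ?_⟩
      · have := (hu n hn).2
        simpa using this
      · rw [List.getD_eq_getElem _ _ hn]
        show u.take n ++ [u[n]] = u
        rw [List.take_concat_get', show n + 1 = u.length from hlen.symm, List.take_length]

lemma finite_iff : (gwTree χ ω).Finite ↔ ∃ n, ω ∈ extEvent χ n := by
  constructor
  · intro hfin
    by_contra h
    push_neg at h
    simp only [extEvent, Set.mem_setOf_eq, not_forall] at h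
    choose f hf1 hf2 using fun n => h n
    simp only [not_not] at hf2
    have hinj : Function.Injective f := fun a b hab => by
      have := hf1 a; rw [hab, hf1 b] at this; exact this.symm
    exact (Set.infinite_of_injective_forall_mem hinj (fun n => hf2 n)) hfin
  · rintro ⟨n, hn⟩
    apply Set.Finite.subset ((Set.finite_Iio n).biUnion
      (fun m _ => gen_finite χ ω m))
    intro u hu
    have hlt : u.length < n := by
      by_contra hge
      exact hn (u.take n) (by simp; omega) (take_mem hu n)
    exact Set.mem_biUnion hlt ⟨hu, rfl⟩

lemma setOf_finite_eq : {ω | (gwTree χ ω).Finite} = ⋃ n, extEvent χ n := by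
  ext ω; simpa using finite_iff


lemma measurableSet_mem_gwTree {M : MeasurableSpace Ω} {χ : List ℕ → Ω → ℕ}
    (h : ∀ u, Measurable[M] (χ u)) (u : List ℕ) :
    MeasurableSet[M] {ω | u ∈ gwTree χ ω} := by
  have he : {ω | u ∈ gwTree χ ω} =
      ⋂ i ∈ Finset.range u.length,
        ({ω | 1 ≤ u.getD i 0} ∩ (χ (u.take i)) ⁻¹' Set.Ici (u.getD i 0)) := by
    ext ω
    simp only [gwTree, Set.mem_setOf_eq, Set.mem_iInter, Finset.mem_range,
      Set.mem_inter_iff, Set.mem_preimage, Set.mem_Ici]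
  rw [he]
  exact MeasurableSet.biInter (Set.to_countable _)
    (fun i _ => (MeasurableSet.const _).inter ((h _) measurableSet_Ici))

lemma measurableSet_extEvent {M : MeasurableSpace Ω} {χ : List ℕ → Ω → ℕ}
    (h : ∀ u, Measurable[M] (χ u)) (n : ℕ) :
    MeasurableSet[M] (extEvent χ n) := by
  have he : extEvent χ n = ⋂ u : List ℕ, {ω | u.length = n → u ∉ gwTree χ ω} := by
    ext ω; simp [extEvent]
  rw [he]
  refine MeasurableSet.iInter fun u => ?_
  by_cases hu : u.length = n
  · have : {ω | u.length = n → u ∉ gwTree χ ω} = {ω | u ∈ gwTree χ ω}ᶜ := by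
      ext ω; simp [hu]
    rw [this]; exact (measurableSet_mem_gwTree h u).compl
  · have : {ω | u.length = n → u ∉ gwTree χ ω} = Set.univ := by
      ext ω; simp [hu]
    rw [this]; exact MeasurableSet.univ

lemma iIndepFun_comp_of_injective {ι κ : Type*} [MeasurableSpace Ω] {μ : Measure Ω}
    {β : Type*} [MeasurableSpace β] {f : ι → Ω → β}
    (hf : iIndepFun f μ) {g : κ → ι} (hg : Function.Injective g) :
    iIndepFun (fun k => f (g k)) μ := by
  classical
  rw [iIndepFun_iff] at hf ⊢
  intro s f' hmeas'
  have h1 : ⋂ i ∈ s.image g, Function.extend g f' (fun _ => Set.univ) i = ⋂ k ∈ s, f' k := by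
    rw [Finset.set_biInter_finset_image]
    exact Set.iInter₂_congr fun k _ => hg.extend_apply _ _ _
  have h2 : ∏ i ∈ s.image g, μ (Function.extend g f' (fun _ => Set.univ) i)
      = ∏ k ∈ s, μ (f' k) := by
    rw [Finset.prod_image (fun a _ b _ hab => hg hab)]
    exact Finset.prod_congr rfl fun k _ => by rw [hg.extend_apply]
  rw [← h1, ← h2]
  refine hf (s.image g) fun i hi => ?_
  obtain ⟨k, hk, rfl⟩ := Finset.mem_image.mp hi
  rw [hg.extend_apply]
  exact hmeas' k hk

/-- Probability of an intersection of events measurable w.r.t. σ-algebras generated by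
disjoint groups of independent random variables factorizes. -/
lemma meas_biInter_groups {ι : Type*} [MeasurableSpace Ω] {μ : Measure Ω}
    [IsProbabilityMeasure μ] {β : Type*} [MeasurableSpace β] {f : ι → Ω → β}
    (hmeas : ∀ i, Measurable (f i)) (hindep : iIndepFun f μ)
    (T : ℕ → Set ι) (hT : Pairwise (Function.onFun Disjoint T)) (A : ℕ → Set Ω)
    (hA : ∀ i, MeasurableSet[⨆ u ∈ T i, MeasurableSpace.comap (f u) inferInstance] (A i)) :
    ∀ s : Finset ℕ, μ (⋂ i ∈ s, A i) = ∏ i ∈ s, μ (A i) := by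
  classical
  intro s
  induction s using Finset.induction_on with
  | empty => simp
  | @insert a s ha IH =>
    rw [Finset.set_biInter_insert, Finset.prod_insert ha, ← IH]
    have hdisj : Disjoint (T a) (⋃ i ∈ (s : Set ℕ), T i) := by
      rw [Set.disjoint_iUnion_right]
      intro i
      rw [Set.disjoint_iUnion_right]
      intro hi
      exact hT (fun hai => ha (hai ▸ hi))
    have hind2 : Indep (⨆ u ∈ T a, MeasurableSpace.comap (f u) inferInstance)
        (⨆ u ∈ ⋃ i ∈ (s : Set ℕ), T i, MeasurableSpace.comap (f u) inferInstance) μ :=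
      indep_iSup_of_disjoint (fun u => (hmeas u).comap_le) hindep.iIndep hdisj
    refine (Indep_iff _ _ _).mp hind2 _ _ (hA a) ?_
    refine MeasurableSet.biInter (Set.to_countable _) fun i hi => ?_
    have hle : (⨆ u ∈ T i, MeasurableSpace.comap (f u) inferInstance) ≤
        ⨆ u ∈ ⋃ j ∈ (s : Set ℕ), T j, MeasurableSpace.comap (f u) inferInstance := by
      refine iSup_le fun u => iSup_le fun hu => ?_
      exact le_iSup₂ (f := fun u (_ : u ∈ ⋃ j ∈ (s : Set ℕ), T j) =>
        MeasurableSpace.comap (f u) inferInstance) u (Set.mem_biUnion hi hu)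
    exact hle _ (hA i)


/-- The iterates of the generating function, starting at `0`. -/
noncomputable def gwQ (p : PMF ℕ) : ℕ → ℝ≥0∞
  | 0 => 0
  | n + 1 => ∑' k : ℕ, p k * gwQ p n ^ k

theorem measure_extEvent [MeasureSpace Ω] [IsProbabilityMeasure (ℙ : Measure Ω)]
    (p : PMF ℕ) :
    ∀ (n : ℕ) (χ : List ℕ → Ω → ℕ), (∀ u, Measurable (χ u)) →
      iIndepFun χ ℙ →
      (∀ u, Measure.map (χ u) ℙ = p.toMeasure) →
      ℙ (extEvent χ n) = gwQ p n := by
  intro n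
  induction n with
  | zero => intro χ _ _ _; simp [extEvent_zero, gwQ]
  | succ n IH =>
    intro χ hmeas hindep hdist
    classical
    -- the shifted families
    set χs : ℕ → List ℕ → Ω → ℕ := fun j w => χ (j :: w) with hχs
    -- decomposition of the event according to the offspring number of the root
    have hdecomp : extEvent χ (n + 1) =
        ⋃ k : ℕ, ((χ []) ⁻¹' {k} ∩ ⋂ j ∈ Finset.Icc 1 k, extEvent (χs j) n) := by
      ext ω
      simp only [Set.mem_iUnion, Set.mem_inter_iff, Set.mem_preimage, Set.mem_singleton_iff,
        Set.mem_iInter, Finset.mem_Icc]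
      constructor
      · intro h
        refine ⟨χ [] ω, rfl, fun j hj v hv hvmem => ?_⟩
        exact h (j :: v) (by simp [hv]) (cons_mem.mpr ⟨⟨hj.1, hj.2⟩, hvmem⟩)
      · rintro ⟨k, rfl, h⟩ u hu humem
        match u with
        | [] => simp at hu
        | a :: v =>
          rw [cons_mem] at humem
          obtain ⟨⟨h1, h2⟩, hv⟩ := humem
          exact h a ⟨h1, h2⟩ v (by simpa using hu) hv
    -- measurability of shifted families
    have hmeas_s : ∀ j u, Measurable (χs j u) := fun j u => hmeas _
    have hAmeas : ∀ k : ℕ,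
        MeasurableSet ((χ []) ⁻¹' {k} ∩ ⋂ j ∈ Finset.Icc 1 k, extEvent (χs j) n) := by
      intro k
      refine ((hmeas []) (measurableSet_singleton k)).inter ?_
      exact MeasurableSet.biInter (Set.to_countable _)
        (fun j _ => measurableSet_extEvent (hmeas_s j) n)
    have hdisj : Pairwise (Function.onFun Disjoint fun k : ℕ =>
        (χ []) ⁻¹' {k} ∩ ⋂ j ∈ Finset.Icc 1 k, extEvent (χs j) n) := by
      intro i j hij
      refine Set.disjoint_left.mpr ?_
      rintro ω ⟨hi, -⟩ ⟨hj, -⟩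
      exact hij (hi.symm.trans hj)
    -- probability of each shifted extinction event
    have hshift : ∀ j : ℕ, ℙ (extEvent (χs j) n) = gwQ p n := by
      intro j
      refine IH (χs j) (hmeas_s j) ?_ (fun u => hdist _)
      exact iIndepFun_comp_of_injective hindep
        (fun a b hab => by injection hab)
    -- probability of root's offspring count
    have hroot : ∀ k : ℕ, ℙ ((χ []) ⁻¹' {k}) = p k := by
      intro k
      have : Measure.map (χ []) ℙ {k} = ℙ ((χ []) ⁻¹' {k}) :=
        Measure.map_apply (hmeas []) (measurableSet_singleton _)
      rw [← this, hdist [], PMF.toMeasure_apply_singleton _ _ (measurableSet_singleton _)]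
    -- independence factorization for each k
    have hterm : ∀ k : ℕ,
        ℙ ((χ []) ⁻¹' {k} ∩ ⋂ j ∈ Finset.Icc 1 k, extEvent (χs j) n)
          = p k * gwQ p n ^ k := by
      intro k
      set T : ℕ → Set (List ℕ) := fun i =>
        if i = 0 then {([] : List ℕ)} else {v | ∃ w, v = i :: w} with hT
      set A : ℕ → Set Ω := fun i =>
        if i = 0 then (χ []) ⁻¹' {k} else extEvent (χs i) n with hA
      have hTdisj : Pairwise (Function.onFun Disjoint T) := by
        intro i j hij
        refine Set.disjoint_left.mpr ?_
        intro v hvi hvj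
        rcases eq_or_ne i 0 with rfl | hi0 <;> rcases eq_or_ne j 0 with rfl | hj0
        · exact hij rfl
        · simp only [hT, if_pos rfl, if_neg hj0, Set.mem_singleton_iff,
            Set.mem_setOf_eq] at hvi hvj
          obtain ⟨w, hw⟩ := hvj; rw [hvi] at hw; exact absurd hw (by simp)
        · simp only [hT, if_pos rfl, if_neg hi0, Set.mem_singleton_iff,
            Set.mem_setOf_eq] at hvi hvj
          obtain ⟨w, hw⟩ := hvi; rw [hvj] at hw; exact absurd hw (by simp)
        · simp only [hT, if_neg hi0, if_neg hj0, Set.mem_setOf_eq] at hvi hvj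
          obtain ⟨w, hw⟩ := hvi; obtain ⟨w', hw'⟩ := hvj
          rw [hw] at hw'
          injection hw' with h1 _
          exact hij h1
      have hAmeas' : ∀ i : ℕ,
          MeasurableSet[⨆ u ∈ T i, MeasurableSpace.comap (χ u) inferInstance] (A i) := by
        intro i
        rcases eq_or_ne i 0 with rfl | hi0
        · simp only [hA, if_pos rfl, hT]
          have hle : MeasurableSpace.comap (χ []) inferInstance ≤
              ⨆ u ∈ ({([] : List ℕ)} : Set (List ℕ)),
                MeasurableSpace.comap (χ u) inferInstance :=
            le_iSup₂ (f := fun u (_ : u ∈ ({([] : List ℕ)} : Set (List ℕ))) =>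
              MeasurableSpace.comap (χ u) inferInstance) [] rfl
          exact hle _ ⟨{k}, measurableSet_singleton k, rfl⟩
        · simp only [hA, if_neg hi0, hT]
          refine measurableSet_extEvent (fun w => Measurable.of_comap_le ?_) n
          have hTi : T i = {v : List ℕ | ∃ w, v = i :: w} := by simp only [hT, if_neg hi0]
          simp only [hTi]
          exact le_iSup₂ (f := fun u (_ : u ∈ {v : List ℕ | ∃ w, v = i :: w}) =>
            MeasurableSpace.comap (χ u) inferInstance) (i :: w) ⟨w, rfl⟩
      have hfact := meas_biInter_groups hmeas hindep T hTdisj A hAmeas' (Finset.range (k + 1))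
      have hset : ⋂ i ∈ Finset.range (k + 1), A i =
          (χ []) ⁻¹' {k} ∩ ⋂ j ∈ Finset.Icc 1 k, extEvent (χs j) n := by
        ext ω
        simp only [Set.mem_iInter, Finset.mem_range, Set.mem_inter_iff, Finset.mem_Icc, hA]
        constructor
        · intro h
          refine ⟨by simpa using h 0 (by omega), fun j hj => ?_⟩
          have := h j (by omega)
          rwa [if_neg (by omega)] at this
        · rintro ⟨h0, h⟩ i hi
          rcases eq_or_ne i 0 with rfl | hi0
          · simpa using h0
          · rw [if_neg hi0]
            exact h i ⟨by omega, by omega⟩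
      rw [← hset, hfact]
      rw [Finset.prod_range_succ']
      have h0 : ℙ (A 0) = p k := by
        simp only [hA, if_pos rfl]; exact hroot k
      have hs : ∀ i : ℕ, ℙ (A (i + 1)) = gwQ p n := fun i => by
        simp only [hA, if_neg (Nat.succ_ne_zero i)]; exact hshift (i + 1)
      rw [h0, Finset.prod_congr rfl (fun i _ => hs i), Finset.prod_const, Finset.card_range]
      ring
    calc ℙ (extEvent χ (n + 1))
        = ∑' k : ℕ, ℙ ((χ []) ⁻¹' {k} ∩ ⋂ j ∈ Finset.Icc 1 k, extEvent (χs j) n) := by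
          rw [hdecomp]; exact measure_iUnion hdisj hAmeas
      _ = ∑' k : ℕ, p k * gwQ p n ^ k := tsum_congr hterm
      _ = gwQ p (n + 1) := rfl

/-- The generating function of `p`. -/
noncomputable def gwF (p : PMF ℕ) (x : ℝ≥0∞) : ℝ≥0∞ := ∑' k : ℕ, p k * x ^ k

lemma gwQ_succ (p : PMF ℕ) (n : ℕ) : gwQ p (n + 1) = gwF p (gwQ p n) := rfl

lemma gwF_mono (p : PMF ℕ) : Monotone (gwF p) := fun x y h =>
  ENNReal.tsum_le_tsum fun k => mul_le_mul_right (pow_le_pow_left' h k) _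

lemma gwF_le_one (p : PMF ℕ) {x : ℝ≥0∞} (hx : x ≤ 1) : gwF p x ≤ 1 := by
  calc gwF p x ≤ ∑' k : ℕ, p k :=
        ENNReal.tsum_le_tsum fun k => by
          calc p k * x ^ k ≤ p k * 1 := mul_le_mul_right (pow_le_one' hx k) _
            _ = p k := mul_one _
    _ = 1 := p.tsum_coe

lemma gwF_ne_top (p : PMF ℕ) {x : ℝ≥0∞} (hx : x ≤ 1) : gwF p x ≠ ∞ :=
  fun h => by simpa [h] using gwF_le_one p hx

lemma gwQ_le_one (p : PMF ℕ) : ∀ n, gwQ p n ≤ 1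
  | 0 => zero_le
  | n + 1 => by rw [gwQ_succ]; exact gwF_le_one p (gwQ_le_one p n)

lemma gwQ_mono (p : PMF ℕ) : Monotone (gwQ p) := by
  apply monotone_nat_of_le_succ
  intro n
  induction n with
  | zero => exact zero_le
  | succ n ih => rw [gwQ_succ, gwQ_succ]; exact gwF_mono p ih

lemma tsum_iSup_mono {g : ℕ → ℕ → ℝ≥0∞} (hmono : ∀ k, Monotone fun n => g n k) :
    ∑' k : ℕ, ⨆ n, g n k = ⨆ n, ∑' k : ℕ, g n k := by
  calc ∑' k : ℕ, ⨆ n, g n k = ∫⁻ k, ⨆ n, g n k ∂Measure.count := (lintegral_count _).symm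
    _ = ⨆ n, ∫⁻ k, g n k ∂Measure.count :=
        lintegral_iSup (fun n => measurable_from_nat) (fun a b hab k => hmono k hab)
    _ = ⨆ n, ∑' k : ℕ, g n k := iSup_congr fun n => lintegral_count _

lemma pow_iSup_mono {u : ℕ → ℝ≥0∞} (hu : Monotone u) (k : ℕ) :
    (⨆ n, u n) ^ k = ⨆ n, u n ^ k := by
  induction k with
  | zero => simp
  | succ k ih =>
    apply le_antisymm
    · rw [pow_succ, ih, ENNReal.iSup_mul]
      refine iSup_le fun n => ?_
      rw [ENNReal.mul_iSup]
      refine iSup_le fun m => ?_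
      refine le_iSup_of_le (max n m) ?_
      rw [pow_succ]
      exact mul_le_mul' (pow_le_pow_left' (hu (le_max_left n m)) k) (hu (le_max_right n m))
    · exact iSup_le fun n => pow_le_pow_left' (le_iSup u n) (k + 1)

lemma gwF_iSup (p : PMF ℕ) {u : ℕ → ℝ≥0∞} (hu : Monotone u) :
    gwF p (⨆ n, u n) = ⨆ n, gwF p (u n) := by
  unfold gwF
  have h : ∀ k : ℕ, p k * (⨆ n, u n) ^ k = ⨆ n, p k * u n ^ k := fun k => by
    rw [pow_iSup_mono hu, ENNReal.mul_iSup]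
  rw [tsum_congr h]
  exact tsum_iSup_mono fun k a b hab => mul_le_mul_right (pow_le_pow_left' (hu hab) k) _

lemma one_sub_pow_eq {t : ℝ≥0} (ht : t ≤ 1) (k : ℕ) :
    1 - (t : ℝ≥0∞) ^ k = (1 - (t : ℝ≥0∞)) * ∑ i ∈ Finset.range k, (t : ℝ≥0∞) ^ i := by
  have htk : t ^ k ≤ 1 := pow_le_one' ht k
  have hnn : (1 - t) * ∑ i ∈ Finset.range k, t ^ i = 1 - t ^ k := by
    apply NNReal.coe_injective
    push_cast [NNReal.coe_sub ht, NNReal.coe_sub htk]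
    linear_combination -geom_sum_mul (t : ℝ) k
  have e1 : (1 : ℝ≥0∞) - (t : ℝ≥0∞) ^ k = ((1 - t ^ k : ℝ≥0) : ℝ≥0∞) := by
    rw [ENNReal.coe_sub, ENNReal.coe_one, ENNReal.coe_pow]
  have e2 : (1 : ℝ≥0∞) - (t : ℝ≥0∞) = ((1 - t : ℝ≥0) : ℝ≥0∞) := by
    rw [ENNReal.coe_sub, ENNReal.coe_one]
  rw [e1, e2, ← hnn]
  push_cast
  rfl

lemma term_eq (p : PMF ℕ) {t : ℝ≥0} (ht : t ≤ 1) (k : ℕ) :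
    p k - p k * (t : ℝ≥0∞) ^ k
      = p k * ((1 - (t : ℝ≥0∞)) * ∑ i ∈ Finset.range k, (t : ℝ≥0∞) ^ i) := by
  rw [← one_sub_pow_eq ht, ENNReal.mul_sub (fun _ _ => p.apply_ne_top k), mul_one]

lemma one_sub_gwF (p : PMF ℕ) {x : ℝ≥0∞} (hx : x ≤ 1) :
    1 - gwF p x = ∑' k : ℕ, (p k - p k * x ^ k) := by
  have h2 : ∀ k : ℕ, p k * x ^ k ≤ p k := fun k => by
    calc p k * x ^ k ≤ p k * 1 := mul_le_mul_right (pow_le_one' hx k) _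
      _ = p k := mul_one _
  unfold gwF
  rw [ENNReal.tsum_sub (gwF_ne_top p hx) h2, p.tsum_coe]

lemma lt_gwF (p : PMF ℕ) (hm : ∑' k : ℕ, (k : ℝ≥0∞) * p k ≤ 1) (hp1 : p 1 ≠ 1)
    {x : ℝ≥0∞} (hx : x < 1) : x < gwF p x := by
  have hx1 : x ≤ 1 := hx.le
  have hxt : x ≠ ∞ := (hx.trans_le le_top).ne
  set t : ℝ≥0 := x.toNNReal with htdef
  have hxe : x = (t : ℝ≥0∞) := (ENNReal.coe_toNNReal hxt).symm
  have ht1 : t ≤ 1 := by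
    rw [hxe, ← ENNReal.coe_one, ENNReal.coe_le_coe] at hx1; exact hx1
  by_cases hcase : ∃ k, 2 ≤ k ∧ p k ≠ 0
  · obtain ⟨k₀, hk₀2, hk₀⟩ := hcase
    have hxpow : ∀ i : ℕ, x ^ i ≤ 1 := fun i => pow_le_one' hx1 i
    have hSle : ∀ k : ℕ, (∑ i ∈ Finset.range k, x ^ i) ≤ (k : ℝ≥0∞) := fun k => by
      calc (∑ i ∈ Finset.range k, x ^ i) ≤ ∑ _i ∈ Finset.range k, (1 : ℝ≥0∞) :=
            Finset.sum_le_sum fun i _ => hxpow i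
        _ = (k : ℝ≥0∞) := by simp
    have hSlt : (∑ i ∈ Finset.range k₀, x ^ i) < (k₀ : ℝ≥0∞) := by
      have h1mem : 1 ∈ Finset.range k₀ := Finset.mem_range.mpr (by omega)
      rw [← Finset.add_sum_erase (Finset.range k₀) (fun i => x ^ i) h1mem, pow_one]
      have hrest : ∑ i ∈ (Finset.range k₀).erase 1, x ^ i ≤ ((k₀ - 1 : ℕ) : ℝ≥0∞) := by
        calc ∑ i ∈ (Finset.range k₀).erase 1, x ^ i
            ≤ ∑ _i ∈ (Finset.range k₀).erase 1, (1 : ℝ≥0∞) :=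
              Finset.sum_le_sum fun i _ => hxpow i
          _ = ((k₀ - 1 : ℕ) : ℝ≥0∞) := by
              rw [Finset.sum_const, Finset.card_erase_of_mem h1mem, Finset.card_range]
              simp
      calc x + ∑ i ∈ (Finset.range k₀).erase 1, x ^ i
          ≤ x + ((k₀ - 1 : ℕ) : ℝ≥0∞) := add_le_add_right hrest x
        _ < 1 + ((k₀ - 1 : ℕ) : ℝ≥0∞) :=
            ENNReal.add_lt_add_right (ENNReal.natCast_ne_top _) hx
        _ = (k₀ : ℝ≥0∞) := by
            rw [← Nat.cast_one, ← Nat.cast_add]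
            congr 1
            omega
    have h1x0 : (1 : ℝ≥0∞) - x ≠ 0 := by
      simp only [ne_eq, tsub_eq_zero_iff_le, not_le]; exact hx
    have h1xt : (1 : ℝ≥0∞) - x ≠ ∞ := (tsub_le_self.trans_lt (by norm_num)).ne
    have hterm_le : ∀ k : ℕ, p k - p k * x ^ k ≤ (k : ℝ≥0∞) * p k * (1 - x) := fun k => by
      rw [hxe, term_eq p ht1 k, ← hxe]
      calc p k * ((1 - x) * ∑ i ∈ Finset.range k, x ^ i)
          ≤ p k * ((1 - x) * k) := mul_le_mul_right (mul_le_mul_right (hSle k) _) _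
        _ = (k : ℝ≥0∞) * p k * (1 - x) := by ring
    have hterm_lt : p k₀ - p k₀ * x ^ k₀ < (k₀ : ℝ≥0∞) * p k₀ * (1 - x) := by
      rw [hxe, term_eq p ht1 k₀, ← hxe]
      calc p k₀ * ((1 - x) * ∑ i ∈ Finset.range k₀, x ^ i)
          < p k₀ * ((1 - x) * k₀) := by
            refine ENNReal.mul_lt_mul_right hk₀ (p.apply_ne_top k₀) ?_
            exact ENNReal.mul_lt_mul_right h1x0 h1xt hSlt
        _ = (k₀ : ℝ≥0∞) * p k₀ * (1 - x) := by ring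
    have hfin : ∑' k : ℕ, (p k - p k * x ^ k) ≠ ∞ := by
      refine ne_top_of_le_ne_top p.tsum_coe_ne_top (ENNReal.tsum_le_tsum fun k => tsub_le_self)
    have hsum_lt : ∑' k : ℕ, (p k - p k * x ^ k) < ∑' k : ℕ, (k : ℝ≥0∞) * p k * (1 - x) :=
      ENNReal.tsum_lt_tsum hfin hterm_le hterm_lt
    have hRHS : ∑' k : ℕ, (k : ℝ≥0∞) * p k * (1 - x) = (∑' k : ℕ, (k : ℝ≥0∞) * p k) * (1 - x) :=
      ENNReal.tsum_mul_right
    have hmain : 1 - gwF p x < 1 - x := by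
      calc 1 - gwF p x = ∑' k : ℕ, (p k - p k * x ^ k) := one_sub_gwF p hx1
        _ < ∑' k : ℕ, (k : ℝ≥0∞) * p k * (1 - x) := hsum_lt
        _ = (∑' k : ℕ, (k : ℝ≥0∞) * p k) * (1 - x) := hRHS
        _ ≤ 1 * (1 - x) := mul_le_mul_left hm _
        _ = 1 - x := one_mul _
    by_contra hle
    rw [not_lt] at hle
    exact absurd (tsub_le_tsub_left hle 1) (not_le.mpr hmain)
  · push_neg at hcase
    have hzero : ∀ k, 2 ≤ k → p k = 0 := fun k hk => by
      by_contra h; exact h (hcase k hk) |>.elim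
    have hsum : p 0 + p 1 = 1 := by
      have h := p.tsum_coe
      rw [tsum_eq_sum (s := ({0, 1} : Finset ℕ))
        (fun k hk => hcase k (by simp at hk; omega))] at h
      rwa [Finset.sum_pair (by norm_num : (0 : ℕ) ≠ 1)] at h
    have hp0 : p 0 ≠ 0 := fun h0 => hp1 (by rwa [h0, zero_add] at hsum)
    have hgwF : gwF p x = p 0 + p 1 * x := by
      unfold gwF
      rw [tsum_eq_sum (s := ({0, 1} : Finset ℕ))
        (fun k hk => by rw [hcase k (by simp at hk; omega), zero_mul])]
      rw [Finset.sum_pair (by norm_num : (0 : ℕ) ≠ 1)]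
      simp
    calc x = (p 0 + p 1) * x := by rw [hsum, one_mul]
      _ = p 0 * x + p 1 * x := by ring
      _ < p 0 * 1 + p 1 * x := by
          refine ENNReal.add_lt_add_right (ENNReal.mul_ne_top (p.apply_ne_top 1) hxt) ?_
          exact ENNReal.mul_lt_mul_right hp0 (p.apply_ne_top 0) hx
      _ = gwF p x := by rw [mul_one, hgwF]

lemma exists_fixed_lt (p : PMF ℕ) (hm : 1 < ∑' k : ℕ, (k : ℝ≥0∞) * p k) :
    ∃ s : ℝ≥0∞, s < 1 ∧ gwF p s < s := by
  rw [ENNReal.tsum_eq_iSup_sum] at hm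
  obtain ⟨F, hF⟩ := lt_iSup_iff.mp hm
  set c : ℝ≥0∞ := ∑ k ∈ F, (k : ℝ≥0∞) * p k with hc
  have hcne : c ≠ ∞ := by
    rw [hc]
    exact (ENNReal.sum_lt_top.mpr fun k _ =>
      ENNReal.mul_lt_top (ENNReal.natCast_lt_top k) (p.apply_lt_top k)).ne
  set K : ℕ := F.sup id with hK
  have hKk : ∀ k ∈ F, k ≤ K := fun k hk => Finset.le_sup (f := id) hk
  set ct : ℝ≥0 := c.toNNReal with hct
  have hcc : c = (ct : ℝ≥0∞) := (ENNReal.coe_toNNReal hcne).symm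
  have hct1 : (1 : ℝ≥0) < ct := by
    rwa [hcc, ← ENNReal.coe_one, ENNReal.coe_lt_coe] at hF
  have hctpos : (0 : ℝ≥0) < ct := lt_trans zero_lt_one hct1
  have hctinv1 : ct⁻¹ < 1 := inv_lt_one_of_one_lt₀ hct1
  have hctinv0 : (0 : ℝ≥0) < ct⁻¹ := by positivity
  set e : ℝ := ((K : ℝ) + 1)⁻¹ with he
  have he0 : 0 < e := by positivity
  set sN : ℝ≥0 := ct⁻¹ ^ e with hsN
  have hsN1 : sN < 1 := NNReal.rpow_lt_one hctinv1 he0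
  have hKe : (K : ℝ) * e < 1 := by
    rw [he, ← div_eq_mul_inv]
    rw [div_lt_one (by positivity)]
    linarith
  have hpow : sN ^ K = ct⁻¹ ^ ((K : ℝ) * e) := by
    rw [← NNReal.rpow_natCast sN K, hsN, ← NNReal.rpow_mul, mul_comm]
  have hgt : ct⁻¹ ^ ((1 : ℝ)) < ct⁻¹ ^ ((K : ℝ) * e) :=
    NNReal.rpow_lt_rpow_of_exponent_gt hctinv0 hctinv1 hKe
  have hkey : 1 < sN ^ K * ct := by
    calc (1 : ℝ≥0) = ct⁻¹ * ct := (inv_mul_cancel₀ (ne_of_gt hctpos)).symm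
      _ < sN ^ K * ct := by
          refine mul_lt_mul_of_pos_right ?_ hctpos
          rw [hpow]
          simpa [NNReal.rpow_one] using hgt
  set x : ℝ≥0∞ := (sN : ℝ≥0∞) with hxd
  have hx1 : x < 1 := by rw [hxd, ← ENNReal.coe_one, ENNReal.coe_lt_coe]; exact hsN1
  have hxK : (1 : ℝ≥0∞) < x ^ K * c := by
    rw [hxd, hcc, ← ENNReal.coe_pow, ← ENNReal.coe_mul, ← ENNReal.coe_one, ENNReal.coe_lt_coe]
    exact hkey
  have h1x0 : (1 : ℝ≥0∞) - x ≠ 0 := by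
    simp only [ne_eq, tsub_eq_zero_iff_le, not_le]; exact hx1
  have h1xt : (1 : ℝ≥0∞) - x ≠ ∞ := (tsub_le_self.trans_lt (by norm_num)).ne
  refine ⟨x, hx1, ?_⟩
  have hsum_le : ∑ k ∈ F, ((1 - x) * x ^ K) * ((k : ℝ≥0∞) * p k)
      ≤ ∑ k ∈ F, (p k - p k * x ^ k) := by
    refine Finset.sum_le_sum fun k hk => ?_
    rw [hxd, term_eq p hsN1.le k, ← hxd]
    have hSk : (k : ℝ≥0∞) * x ^ K ≤ ∑ i ∈ Finset.range k, x ^ i := by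
      calc (k : ℝ≥0∞) * x ^ K = ∑ _i ∈ Finset.range k, x ^ K := by simp
        _ ≤ ∑ i ∈ Finset.range k, x ^ i := by
            refine Finset.sum_le_sum fun i hi => ?_
            refine pow_le_pow_right_of_le_one' hx1.le ?_
            have hik := Finset.mem_range.mp hi
            have := hKk k hk
            omega
    calc ((1 - x) * x ^ K) * ((k : ℝ≥0∞) * p k)
        = p k * ((1 - x) * ((k : ℝ≥0∞) * x ^ K)) := by ring
      _ ≤ p k * ((1 - x) * ∑ i ∈ Finset.range k, x ^ i) :=
          mul_le_mul_right (mul_le_mul_right hSk _) _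
  have hmain : 1 - x < 1 - gwF p x := by
    calc 1 - x = (1 - x) * 1 := (mul_one _).symm
      _ < (1 - x) * (x ^ K * c) := ENNReal.mul_lt_mul_right h1x0 h1xt hxK
      _ = ∑ k ∈ F, ((1 - x) * x ^ K) * ((k : ℝ≥0∞) * p k) := by
          rw [← Finset.mul_sum, ← hc]; ring
      _ ≤ ∑ k ∈ F, (p k - p k * x ^ k) := hsum_le
      _ ≤ ∑' k : ℕ, (p k - p k * x ^ k) := ENNReal.sum_le_tsum F
      _ = 1 - gwF p x := (one_sub_gwF p hx1.le).symm
  by_contra hle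
  rw [not_lt] at hle
  exact absurd (tsub_le_tsub_left hle 1) (not_le.mpr hmain)


end GWaux

/-- Extinction criterion: the Galton–Watson tree with offspring distribution `p`
(with `p 1 ≠ 1`) is finite almost surely iff `∑ k, k * p k ≤ 1`. -/
theorem gwTree_finite_iff_subcritical {Ω : Type*} [MeasureSpace Ω]
    [IsProbabilityMeasure (ℙ : Measure Ω)]
    (p : PMF ℕ) (χ : List ℕ → Ω → ℕ)
    (hmeas : ∀ u, Measurable (χ u))
    (hindep : iIndepFun χ ℙ)
    (hdist : ∀ u, Measure.map (χ u) ℙ = p.toMeasure)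
    (hp1 : p 1 ≠ 1) :
    ℙ {ω | (gwTree χ ω).Finite} = 1 ↔ ∑' k : ℕ, (k : ENNReal) * p k ≤ 1 := by
  have hmono : Monotone (fun n => GWaux.extEvent χ n) := fun a b h => GWaux.extEvent_mono h
  have hmeasure : ℙ {ω | (gwTree χ ω).Finite} = ⨆ n, GWaux.gwQ p n := by
    rw [GWaux.setOf_finite_eq, hmono.directed_le.measure_iUnion]
    exact iSup_congr fun n => GWaux.measure_extEvent p n χ hmeas hindep hdist
  constructor
  · intro h1
    by_contra hm
    rw [not_le] at hm
    obtain ⟨s, hs1, hfs⟩ := GWaux.exists_fixed_lt p hm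
    have hb : ∀ n, GWaux.gwQ p n ≤ s := by
      intro n
      induction n with
      | zero => exact zero_le
      | succ n ih =>
        rw [GWaux.gwQ_succ]
        exact le_trans (GWaux.gwF_mono p ih) hfs.le
    have hle : (1 : ℝ≥0∞) ≤ s := by
      rw [← h1, hmeasure]
      exact iSup_le hb
    exact absurd hle (not_le.mpr hs1)
  · intro hm
    rw [hmeasure]
    set Q := ⨆ n, GWaux.gwQ p n with hQdef
    have hQ1 : Q ≤ 1 := iSup_le (GWaux.gwQ_le_one p)
    rcases lt_or_eq_of_le hQ1 with hlt | heq
    · exfalso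
      have hfix : GWaux.gwF p Q = Q := by
        rw [hQdef, GWaux.gwF_iSup p (GWaux.gwQ_mono p)]
        apply le_antisymm
        · refine iSup_le fun n => ?_
          rw [← GWaux.gwQ_succ]
          exact le_iSup (GWaux.gwQ p) (n + 1)
        · refine iSup_le fun n => ?_
          refine le_trans (GWaux.gwQ_mono p (Nat.le_succ n)) ?_
          rw [GWaux.gwQ_succ]
          exact le_iSup (fun m => GWaux.gwF p (GWaux.gwQ p m)) n
      have := GWaux.lt_gwF p hm hp1 hlt
      rw [hfix] at this
      exact lt_irrefl Q this
    · exact heq
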